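/- arXiv:1603.09077 — 2 statements merged into one kernel-verified Lean document; each statement's English description precedes it below -/
import Mathlib

section
/- Let 0 ≤ α < 1 and θ > −α with (α,θ) ≠ (0,0), and let i > j ≥ 1 be integers. Then the series Σ_{k=i}^{∞} s_α(k,j)/Γ(θ + k + 1) converges and (1/Γ(θ + i))·Σ_{k=1}^{j} c_{k,α,θ}·Γ(θ + αk)·s_α(i,k) = c_{j,α,θ}·Γ(θ + αj + 1)·Σ_{k=i}^{∞} s_α(k,j)/Γ(θ + k + 1), where c_{k,α,θ} := Π_{m=1}^{k} Γ(θ + 1 + (m−1)α)/(Γ(1−α)·Γ(θ + mα)) and s_α is defined by s_α(0,0) := 1, s_α(n,m) := 0 for m < 0 or m > n, and s_α(n+1,m) = Γ(1−α)·s_α(n,m−1) + (n − αm)·s_α(n,m). -/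
/-- `s_α`, defined by `s_α(0,0) = 1`, `s_α(n,m) = 0` for `m > n` (automatic below), and the
recursion `s_α(n+1,m) = Γ(1-α) s_α(n,m-1) + (n - αm) s_α(n,m)` (with `s_α(n,-1) := 0`). -/
noncomputable def salpha (α : ℝ) : ℕ → ℕ → ℝ
  | 0, 0 => 1
  | 0, _ + 1 => 0
  | n + 1, 0 => (n : ℝ) * salpha α n 0
  | n + 1, k + 1 =>
      Real.Gamma (1 - α) * salpha α n k + ((n : ℝ) - α * ((k : ℝ) + 1)) * salpha α n (k + 1)

open Filter

example (α : ℝ) (n k : ℕ) : salpha α (n+1) (k+1) =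
    Real.Gamma (1 - α) * salpha α n k + ((n : ℝ) - α * ((k : ℝ) + 1)) * salpha α n (k + 1) := rfl

example (α : ℝ) (n : ℕ) : salpha α (n+1) 0 = (n : ℝ) * salpha α n 0 := rfl

lemma salpha_eq_zero {α : ℝ} : ∀ {n k : ℕ}, n < k → salpha α n k = 0 := by
  intro n
  induction n with
  | zero => intro k hk; cases k with
    | zero => omega
    | succ k => rfl
  | succ n ih =>
    intro k hk
    cases k with
    | zero => omega
    | succ k =>
      show Real.Gamma (1 - α) * salpha α n k + ((n : ℝ) - α * ((k : ℝ) + 1)) * salpha α n (k + 1) = 0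
      rw [ih (by omega), ih (by omega)]; ring

lemma salpha_right_zero {α : ℝ} : ∀ n : ℕ, salpha α (n+1) 0 = 0 := by
  intro n
  induction n with
  | zero => show ((0:ℕ) : ℝ) * salpha α 0 0 = 0; simp
  | succ n ih => show ((n+1:ℕ) : ℝ) * salpha α (n+1) 0 = 0; rw [ih]; ring

lemma salpha_nonneg {α : ℝ} (h0 : 0 ≤ α) (h1 : α < 1) : ∀ n k : ℕ, 0 ≤ salpha α n k := by
  intro n
  induction n with
  | zero => intro k; cases k with
    | zero => norm_num [salpha]
    | succ k => exact le_of_eq rfl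
  | succ n ih =>
    intro k
    cases k with
    | zero =>
      show 0 ≤ (n : ℝ) * salpha α n 0
      exact mul_nonneg (Nat.cast_nonneg n) (ih 0)
    | succ k =>
      show 0 ≤ Real.Gamma (1 - α) * salpha α n k + ((n : ℝ) - α * ((k : ℝ) + 1)) * salpha α n (k + 1)
      have hΓ : 0 < Real.Gamma (1 - α) := Real.Gamma_pos_of_pos (by linarith)
      have h2 : 0 ≤ ((n : ℝ) - α * ((k : ℝ) + 1)) * salpha α n (k + 1) := by
        rcases lt_or_ge n (k+1) with h | h
        · rw [salpha_eq_zero h]; simp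
        · have hha : α * ((k:ℝ)+1) ≤ (k:ℝ)+1 := by nlinarith [Nat.cast_nonneg (α := ℝ) k]
          have hkn : ((k:ℝ)+1) ≤ (n:ℝ) := by exact_mod_cast h
          exact mul_nonneg (by linarith) (ih (k+1))
      have h3 := mul_nonneg hΓ.le (ih k)
      linarith

section
variable {α θ : ℝ}


/-- key growth bound -/
lemma salpha_bound (h0 : 0 ≤ α) (h1 : α < 1) (hθ : -α < θ) :
    ∃ M β : ℝ, 0 < M ∧ β ≤ α ∧ 0 < θ + β ∧ β < 1 ∧
      ∀ n k : ℕ, salpha α (n+1) k ≤ M ^ k * Real.Gamma ((n:ℝ) + 1 - β) := by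
  set ε : ℝ := (θ + α) / 2 with hεdef
  have hε : 0 < ε := by simp only [hεdef]; linarith
  set β : ℝ := α - ε with hβdef
  have hβα : β ≤ α := by simp only [hβdef]; linarith
  have hθβ : θ + β = ε := by simp only [hβdef, hεdef]; ring
  have hβ1 : β < 1 := by linarith
  have h1β : 0 < 1 - β := by linarith
  have hΓβ : 0 < Real.Gamma (1 - β) := Real.Gamma_pos_of_pos h1β
  have hΓα : 0 < Real.Gamma (1 - α) := Real.Gamma_pos_of_pos (by linarith)
  set M : ℝ := max 1 (max (Real.Gamma (1 - α) / ε) (Real.Gamma (1 - α) / Real.Gamma (1 - β))) with hMdef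
  have hM1 : 1 ≤ M := le_max_left _ _
  have hM : 0 < M := lt_of_lt_of_le one_pos hM1
  have hMε : Real.Gamma (1 - α) ≤ ε * M := by
    have : Real.Gamma (1 - α) / ε ≤ M := le_trans (le_max_left _ _) (le_max_right _ _)
    calc Real.Gamma (1 - α) = ε * (Real.Gamma (1 - α) / ε) := by field_simp
    _ ≤ ε * M := by exact mul_le_mul_of_nonneg_left this hε.le
  have hMβ : Real.Gamma (1 - α) ≤ M * Real.Gamma (1 - β) := by
    have : Real.Gamma (1 - α) / Real.Gamma (1 - β) ≤ M :=
      le_trans (le_max_right _ _) (le_max_right _ _)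
    calc Real.Gamma (1 - α) = (Real.Gamma (1 - α) / Real.Gamma (1 - β)) * Real.Gamma (1 - β) := by
          field_simp
    _ ≤ M * Real.Gamma (1 - β) := by exact mul_le_mul_of_nonneg_right this hΓβ.le
  refine ⟨M, β, hM, hβα, by rw [hθβ]; exact hε, hβ1, ?_⟩
  intro n
  induction n with
  | zero =>
    intro k
    have hg : Real.Gamma ((0:ℝ) + 1 - β) = Real.Gamma (1 - β) := by norm_num
    match k with
    | 0 =>
      show ((0:ℕ):ℝ) * salpha α 0 0 ≤ _
      simp only [Nat.cast_zero, zero_mul, pow_zero, one_mul]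
      push_cast
      rw [hg]; exact hΓβ.le
    | 1 =>
      have e : salpha α (0+1) (0+1) = Real.Gamma (1 - α) * salpha α 0 0 +
          (((0:ℕ):ℝ) - α * (((0:ℕ):ℝ) + 1)) * salpha α 0 (0+1) := rfl
      have e0 : salpha α 0 0 = 1 := rfl
      have e1 : salpha α 0 (0+1) = 0 := rfl
      have e' : salpha α (0+1) 1 = Real.Gamma (1 - α) := by
        rw [e, e0, e1]; ring
      rw [e', show ((0:ℕ):ℝ) + 1 - β = 1 - β from by norm_num, pow_one]
      exact hMβ
    | (k+2) =>
      have e : salpha α (0+1) (k+1+1) = Real.Gamma (1 - α) * salpha α 0 (k+1) +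
          (((0:ℕ):ℝ) - α * (((k+1:ℕ):ℝ) + 1)) * salpha α 0 (k+1+1) := rfl
      have e0 : salpha α 0 (k+1) = 0 := rfl
      have e1 : salpha α 0 (k+1+1) = 0 := rfl
      have e' : salpha α (0+1) (k+2) = 0 := by rw [e, e0, e1]; ring
      rw [e', show ((0:ℕ):ℝ) + 1 - β = 1 - β from by norm_num]
      positivity
  | succ n ih =>
    intro k
    match k with
    | 0 =>
      rw [salpha_right_zero]
      have hn0 : (0:ℝ) ≤ (n:ℝ) := Nat.cast_nonneg n
      have hΓpos : 0 < Real.Gamma ((n:ℝ)+1+1-β) := Real.Gamma_pos_of_pos (by linarith)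
      push_cast
      positivity
    | (k+1) =>
      have hrec : salpha α (n+1+1) (k+1) = Real.Gamma (1 - α) * salpha α (n+1) k +
          (((n+1:ℕ):ℝ) - α * ((k:ℝ)+1)) * salpha α (n+1) (k+1) := rfl
      have hs1 := salpha_nonneg h0 h1 (n+1) k
      have hs2 := salpha_nonneg h0 h1 (n+1) (k+1)
      have hc : (((n+1:ℕ):ℝ) - α * ((k:ℝ)+1)) ≤ ((n:ℝ)+1) - α := by
        push_cast
        nlinarith [Nat.cast_nonneg (α := ℝ) k]
      have hn0 : (0:ℝ) ≤ (n:ℝ) := Nat.cast_nonneg n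
      have hΓpos : 0 < Real.Gamma ((n:ℝ)+1-β) := Real.Gamma_pos_of_pos (by linarith)
      have hnα : (0:ℝ) ≤ (n:ℝ) + 1 - α := by
        have : (0:ℝ) ≤ (n:ℝ) := Nat.cast_nonneg n
        linarith
      have step1 : Real.Gamma (1 - α) * salpha α (n+1) k ≤
          Real.Gamma (1 - α) * (M ^ k * Real.Gamma ((n:ℝ)+1-β)) :=
        mul_le_mul_of_nonneg_left (ih k) hΓα.le
      have step2 : (((n+1:ℕ):ℝ) - α * ((k:ℝ)+1)) * salpha α (n+1) (k+1) ≤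
          ((n:ℝ)+1-α) * (M ^ (k+1) * Real.Gamma ((n:ℝ)+1-β)) := by
        calc (((n+1:ℕ):ℝ) - α * ((k:ℝ)+1)) * salpha α (n+1) (k+1)
            ≤ ((n:ℝ)+1-α) * salpha α (n+1) (k+1) := mul_le_mul_of_nonneg_right hc hs2
          _ ≤ ((n:ℝ)+1-α) * (M ^ (k+1) * Real.Gamma ((n:ℝ)+1-β)) :=
              mul_le_mul_of_nonneg_left (ih (k+1)) hnα
      have hΓM : Real.Gamma (1 - α) * (M ^ k * Real.Gamma ((n:ℝ)+1-β)) ≤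
          ε * M ^ (k+1) * Real.Gamma ((n:ℝ)+1-β) := by
        have : Real.Gamma (1 - α) * M ^ k ≤ ε * M ^ (k+1) := by
          calc Real.Gamma (1 - α) * M ^ k ≤ (ε * M) * M ^ k :=
                mul_le_mul_of_nonneg_right hMε (by positivity)
            _ = ε * M ^ (k+1) := by ring
        nlinarith [hΓpos.le, pow_nonneg hM.le k]
      have hgadd : Real.Gamma ((n:ℝ)+1+1-β) = ((n:ℝ)+1-β) * Real.Gamma ((n:ℝ)+1-β) := by
        have hn0 : (0:ℝ) ≤ (n:ℝ) := Nat.cast_nonneg n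
        have hne : (n:ℝ)+1-β ≠ 0 := by intro h; rw [sub_eq_zero] at h; linarith
        have : (n:ℝ)+1+1-β = ((n:ℝ)+1-β) + 1 := by ring
        rw [this, Real.Gamma_add_one hne]
      rw [hrec]
      push_cast
      calc Real.Gamma (1 - α) * salpha α (n+1) k +
            (((n:ℝ)+1) - α * ((k:ℝ)+1)) * salpha α (n+1) (k+1)
          ≤ ε * M ^ (k+1) * Real.Gamma ((n:ℝ)+1-β) +
            ((n:ℝ)+1-α) * (M ^ (k+1) * Real.Gamma ((n:ℝ)+1-β)) := by
            push_cast at step1 step2 hΓM ⊢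
            linarith
        _ = M ^ (k+1) * (((n:ℝ)+1-β) * Real.Gamma ((n:ℝ)+1-β)) := by
            simp only [hβdef]; ring
        _ = M ^ (k+1) * Real.Gamma ((n:ℝ)+1+1-β) := by rw [hgadd]

lemma gamma_ratio_tendsto {θ β : ℝ} (hθβ : 0 < θ + β) (hβ1 : β < 1) (hθ1 : 0 < θ + 1) :
    Tendsto (fun n : ℕ => Real.Gamma ((n:ℝ) - β) / Real.Gamma (θ + (n:ℝ))) atTop (nhds 0) := by
  set t : ℕ → ℝ := fun n => Real.Gamma ((n:ℝ) - β) / Real.Gamma (θ + (n:ℝ)) with ht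
  set u : ℕ → ℝ := fun m => t (m + 1) with hu
  have harg1 : ∀ m : ℕ, (0:ℝ) < ((m+1:ℕ):ℝ) - β := by
    intro m; push_cast; have : (0:ℝ) ≤ (m:ℝ) := Nat.cast_nonneg m; linarith
  have harg2 : ∀ m : ℕ, (0:ℝ) < θ + ((m+1:ℕ):ℝ) := by
    intro m; push_cast; have : (0:ℝ) ≤ (m:ℝ) := Nat.cast_nonneg m; linarith
  have hupos : ∀ m, 0 < u m := fun m =>
    div_pos (Real.Gamma_pos_of_pos (harg1 m)) (Real.Gamma_pos_of_pos (harg2 m))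
  have hstep : ∀ m : ℕ, u (m + 1) = u m * ((((m+1:ℕ):ℝ) - β) / (θ + ((m+1:ℕ):ℝ))) := by
    intro m
    have e1 : ((m+1+1:ℕ):ℝ) - β = (((m+1:ℕ):ℝ) - β) + 1 := by push_cast; ring
    have e2 : θ + ((m+1+1:ℕ):ℝ) = (θ + ((m+1:ℕ):ℝ)) + 1 := by push_cast; ring
    show Real.Gamma (((m+1+1:ℕ):ℝ) - β) / Real.Gamma (θ + ((m+1+1:ℕ):ℝ)) = _
    rw [e1, e2, Real.Gamma_add_one (harg1 m).ne', Real.Gamma_add_one (harg2 m).ne']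
    show _ = Real.Gamma (((m+1:ℕ):ℝ) - β) / Real.Gamma (θ + ((m+1:ℕ):ℝ)) * _
    field_simp
  have hratio_lt : ∀ m : ℕ, (((m+1:ℕ):ℝ) - β) / (θ + ((m+1:ℕ):ℝ)) < 1 := by
    intro m
    rw [div_lt_one (harg2 m)]
    linarith
  have hratio_nonneg : ∀ m : ℕ, 0 ≤ (((m+1:ℕ):ℝ) - β) / (θ + ((m+1:ℕ):ℝ)) := by
    intro m; exact div_nonneg (harg1 m).le (harg2 m).le
  have hanti : Antitone u := by
    apply antitone_nat_of_succ_le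
    intro m
    rw [hstep m]
    nlinarith [hupos m, hratio_lt m]
  have hbdd : BddBelow (Set.range u) := ⟨0, fun x ⟨m, hm⟩ => hm ▸ (hupos m).le⟩
  set L : ℝ := ⨅ m, u m with hL
  have htend : Tendsto u atTop (nhds L) := tendsto_atTop_ciInf hanti hbdd
  have hL0 : 0 ≤ L := le_ciInf fun m => (hupos m).le
  have hLe : L = 0 := by
    by_contra hne
    have hLpos : 0 < L := lt_of_le_of_ne hL0 (Ne.symm hne)
    have hge : ∀ m, L ≤ u m := fun m => ciInf_le hbdd m
    have hdiff : ∀ m : ℕ, L * ((θ + β) / (θ + ((m+1:ℕ):ℝ))) ≤ u m - u (m + 1) := by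
      intro m
      rw [hstep m]
      have hda : (θ + ((m+1:ℕ):ℝ)) ≠ 0 := (harg2 m).ne'
      have e : u m - u m * ((((m+1:ℕ):ℝ) - β) / (θ + ((m+1:ℕ):ℝ)))
          = u m * ((θ + β) / (θ + ((m+1:ℕ):ℝ))) := by
        have hc : (((m+1:ℕ):ℝ) - β) / (θ + ((m+1:ℕ):ℝ))
            = 1 - (θ + β) / (θ + ((m+1:ℕ):ℝ)) := by
          rw [eq_sub_iff_add_eq, ← add_div, div_eq_one_iff_eq hda]
          ring
        rw [hc]; ring
      rw [e]
      have hq : 0 ≤ (θ + β) / (θ + ((m+1:ℕ):ℝ)) := div_nonneg hθβ.le (harg2 m).le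
      exact mul_le_mul_of_nonneg_right (hge m) hq
    have hsummable : Summable (fun m : ℕ => L * ((θ + β) / (θ + ((m+1:ℕ):ℝ)))) := by
      apply summable_of_sum_range_le (c := u 0)
      · intro m
        exact mul_nonneg hLpos.le (div_nonneg hθβ.le (harg2 m).le)
      · intro n
        calc ∑ m ∈ Finset.range n, L * ((θ + β) / (θ + ((m+1:ℕ):ℝ)))
            ≤ ∑ m ∈ Finset.range n, (u m - u (m + 1)) :=
              Finset.sum_le_sum fun m _ => hdiff m
          _ = u 0 - u n := Finset.sum_range_sub' u n
          _ ≤ u 0 := by linarith [hupos n]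
    have hsum2 : Summable (fun m : ℕ => 1 / (θ + ((m+1:ℕ):ℝ))) := by
      have hc : (L * (θ + β)) ≠ 0 := by positivity
      have := hsummable.mul_left (L * (θ + β))⁻¹
      refine this.congr fun m => ?_
      field_simp
    have hsum3 : Summable (fun m : ℕ => 1 / ((m:ℝ) + 1)) := by
      apply Summable.of_nonneg_of_le (fun m => by positivity)
        (fun m => ?_) (hsum2.mul_left (1 + |θ|))
      have h1 : 0 < (m:ℝ) + 1 := by positivity
      have h2 : θ + ((m+1:ℕ):ℝ) ≤ ((m:ℝ) + 1) * (1 + |θ|) := by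
        push_cast
        have h3 : θ ≤ |θ| := le_abs_self θ
        have h4 : (0:ℝ) ≤ (m:ℝ) := Nat.cast_nonneg m
        nlinarith [abs_nonneg θ]
      rw [div_le_iff₀ h1] at *
      calc (1:ℝ) = (θ + ((m+1:ℕ):ℝ)) * (θ + ((m+1:ℕ):ℝ))⁻¹ :=
            (mul_inv_cancel₀ (harg2 m).ne').symm
        _ ≤ ((m:ℝ)+1) * (1+|θ|) * (θ + ((m+1:ℕ):ℝ))⁻¹ := by
            have := inv_nonneg.mpr (harg2 m).le
            exact mul_le_mul_of_nonneg_right h2 this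
        _ = (1 + |θ|) * (1 / (θ + ((m+1:ℕ):ℝ))) * ((m:ℝ)+1) := by ring
    have : Summable (fun m : ℕ => 1 / ((m:ℝ))) := by
      rw [← summable_nat_add_iff 1]
      exact hsum3.congr fun m => by push_cast; ring
    exact Real.not_summable_one_div_natCast this
  rw [hLe] at htend
  have : Tendsto (fun n : ℕ => t (n + 1)) atTop (nhds 0) := htend
  rwa [tendsto_add_atTop_iff_nat 1] at this

lemma salpha_div_tendsto (h0 : 0 ≤ α) (h1 : α < 1) (hθ : -α < θ) (k : ℕ) :
    Tendsto (fun n : ℕ => salpha α n k / Real.Gamma (θ + (n:ℝ))) atTop (nhds 0) := by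
  obtain ⟨M, β, hM, hβα, hθβ, hβ1, hbound⟩ := salpha_bound h0 h1 hθ
  have hθ1 : 0 < θ + 1 := by linarith
  have hratio := gamma_ratio_tendsto hθβ hβ1 hθ1
  have hupper : Tendsto (fun n : ℕ =>
      M ^ k * (Real.Gamma ((n:ℝ) - β) / Real.Gamma (θ + (n:ℝ)))) atTop (nhds 0) := by
    have := hratio.const_mul (M ^ k)
    simpa using this
  refine tendsto_of_tendsto_of_tendsto_of_le_of_le' tendsto_const_nhds hupper ?_ ?_
  · filter_upwards [eventually_ge_atTop 1] with n hn
    have hn' : (1:ℝ) ≤ (n:ℝ) := by exact_mod_cast hn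
    have hΓ : 0 < Real.Gamma (θ + (n:ℝ)) := Real.Gamma_pos_of_pos (by linarith)
    exact div_nonneg (salpha_nonneg h0 h1 n k) hΓ.le
  · filter_upwards [eventually_ge_atTop 1] with n hn
    obtain ⟨m, rfl⟩ := Nat.exists_eq_add_of_le hn
    rw [show 1 + m = m + 1 from by omega]
    have hn' : (1:ℝ) ≤ ((m+1:ℕ):ℝ) := by exact_mod_cast Nat.le_add_left 1 m
    have hΓ : 0 < Real.Gamma (θ + ((m+1:ℕ):ℝ)) := Real.Gamma_pos_of_pos (by linarith)
    have hb := hbound m k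
    have harg : (m:ℝ) + 1 - β = ((m+1:ℕ):ℝ) - β := by push_cast; ring
    rw [harg] at hb
    rw [← mul_div_assoc]
    gcongr

end

/-- `c_{k,α,θ} := ∏_{m=1}^{k} Γ(θ + 1 + (m-1)α)/(Γ(1-α) Γ(θ + mα))`. -/
noncomputable def ccoef (α θ : ℝ) (k : ℕ) : ℝ :=
  ∏ m ∈ Finset.range k,
    Real.Gamma (θ + 1 + m * α) / (Real.Gamma (1 - α) * Real.Gamma (θ + (m + 1) * α))

noncomputable def Bsum (α θ : ℝ) (j n : ℕ) : ℝ :=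
  ∑ k ∈ Finset.Icc 1 j, ccoef α θ k * Real.Gamma (θ + α * k) * salpha α n k

noncomputable def dco (α θ : ℝ) (j : ℕ) : ℝ := ccoef α θ j * Real.Gamma (θ + α * j + 1)

section
variable {α θ : ℝ}

lemma ccoef_pos (h0 : 0 ≤ α) (h1 : α < 1) (hθ : -α < θ) (k : ℕ) : 0 < ccoef α θ k := by
  apply Finset.prod_pos
  intro m _
  have hm : (0:ℝ) ≤ (m:ℝ) := Nat.cast_nonneg m
  have g1 : 0 < Real.Gamma (θ + 1 + m * α) := Real.Gamma_pos_of_pos (by nlinarith)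
  have g2 : 0 < Real.Gamma (1 - α) := Real.Gamma_pos_of_pos (by linarith)
  have g3 : 0 < Real.Gamma (θ + ((m:ℝ) + 1) * α) := Real.Gamma_pos_of_pos (by nlinarith)
  positivity

lemma dco_pos (h0 : 0 ≤ α) (h1 : α < 1) (hθ : -α < θ) (j : ℕ) : 0 < dco α θ j := by
  have hj : (0:ℝ) ≤ (j:ℝ) := Nat.cast_nonneg j
  have g1 : 0 < Real.Gamma (θ + α * j + 1) := Real.Gamma_pos_of_pos (by nlinarith)
  exact mul_pos (ccoef_pos h0 h1 hθ j) g1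

lemma ccoef_rec (h0 : 0 ≤ α) (h1 : α < 1) (hθ : -α < θ) (j : ℕ) :
    ccoef α θ (j+1) * Real.Gamma (θ + α * ((j+1:ℕ):ℝ)) * Real.Gamma (1 - α) =
      ccoef α θ j * Real.Gamma (θ + α * (j:ℝ) + 1) := by
  have hj : (0:ℝ) ≤ (j:ℝ) := Nat.cast_nonneg j
  have g2 : 0 < Real.Gamma (1 - α) := Real.Gamma_pos_of_pos (by linarith)
  have g3 : 0 < Real.Gamma (θ + ((j:ℝ) + 1) * α) := Real.Gamma_pos_of_pos (by nlinarith)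
  have e1 : ccoef α θ (j+1) = ccoef α θ j *
      (Real.Gamma (θ + 1 + j * α) / (Real.Gamma (1 - α) * Real.Gamma (θ + ((j:ℝ) + 1) * α))) :=
    Finset.prod_range_succ _ j
  have e2 : θ + α * ((j+1:ℕ):ℝ) = θ + ((j:ℝ) + 1) * α := by push_cast; ring
  have e3 : θ + 1 + (j:ℝ) * α = θ + α * (j:ℝ) + 1 := by ring
  rw [e1, e2, e3]
  have g3' : Real.Gamma (θ + α + α * (j:ℝ)) ≠ 0 := by
    rw [show θ + α + α * (j:ℝ) = θ + ((j:ℝ) + 1) * α by ring]; exact g3.ne'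
  field_simp
  ring_nf
  rw [mul_assoc _ (Real.Gamma (θ + α + α * (j:ℝ))), mul_inv_cancel₀ g3', mul_one]

lemma key_telescope (h0 : 0 ≤ α) (h1 : α < 1) (hθ : -α < θ) (n : ℕ) (hn : 1 ≤ n) :
    ∀ j : ℕ, (θ + (n:ℝ)) * Bsum α θ j n - Bsum α θ j (n+1) = dco α θ j * salpha α n j := by
  intro j
  induction j with
  | zero =>
    obtain ⟨m, rfl⟩ := Nat.exists_eq_add_of_le hn
    rw [show 1 + m = m + 1 from by omega]
    simp [Bsum, dco, salpha_right_zero]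
  | succ j ih =>
    have h1j : (1:ℕ) ≤ j + 1 := by omega
    have e1 : Bsum α θ (j+1) n = Bsum α θ j n +
        ccoef α θ (j+1) * Real.Gamma (θ + α * ((j+1:ℕ):ℝ)) * salpha α n (j+1) := by
      rw [Bsum, Bsum, Finset.sum_Icc_succ_top h1j]
    have e2 : Bsum α θ (j+1) (n+1) = Bsum α θ j (n+1) +
        ccoef α θ (j+1) * Real.Gamma (θ + α * ((j+1:ℕ):ℝ)) * salpha α (n+1) (j+1) := by
      rw [Bsum, Bsum, Finset.sum_Icc_succ_top h1j]
    have hrec : salpha α (n+1) (j+1) = Real.Gamma (1 - α) * salpha α n j +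
        ((n : ℝ) - α * ((j : ℝ) + 1)) * salpha α n (j+1) := rfl
    have hj : (0:ℝ) ≤ (j:ℝ) := Nat.cast_nonneg j
    have hga : Real.Gamma (θ + α * ((j+1:ℕ):ℝ) + 1) =
        (θ + α * ((j+1:ℕ):ℝ)) * Real.Gamma (θ + α * ((j+1:ℕ):ℝ)) := by
      apply Real.Gamma_add_one
      have : (0:ℝ) < θ + α * ((j+1:ℕ):ℝ) := by push_cast; nlinarith
      exact this.ne'
    have hcc := ccoef_rec h0 h1 hθ j
    have hd1 : dco α θ (j+1) = ccoef α θ (j+1) * Real.Gamma (θ + α * ((j+1:ℕ):ℝ) + 1) := rfl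
    have hd0 : dco α θ j = ccoef α θ j * Real.Gamma (θ + α * (j:ℝ) + 1) := rfl
    rw [e1, e2, hrec, hd1, hga]
    push_cast
    push_cast at ih hcc
    linear_combination ih - salpha α n j * hcc + salpha α n j * hd0

end

lemma telescope_div (h0 : 0 ≤ α) (h1 : α < 1) (hθ : -α < θ) (n : ℕ) (hn : 1 ≤ n) (j : ℕ) :
    Bsum α θ j n / Real.Gamma (θ + (n:ℝ)) - Bsum α θ j (n+1) / Real.Gamma (θ + ((n+1:ℕ):ℝ)) =
      dco α θ j * salpha α n j / Real.Gamma (θ + ((n+1:ℕ):ℝ)) := by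
  have hn' : (1:ℝ) ≤ (n:ℝ) := by exact_mod_cast hn
  have hpos : (0:ℝ) < θ + (n:ℝ) := by linarith
  have hΓ : 0 < Real.Gamma (θ + (n:ℝ)) := Real.Gamma_pos_of_pos hpos
  have hadd : Real.Gamma (θ + ((n+1:ℕ):ℝ)) = (θ + (n:ℝ)) * Real.Gamma (θ + (n:ℝ)) := by
    rw [show θ + ((n+1:ℕ):ℝ) = (θ + (n:ℝ)) + 1 from by push_cast; ring,
      Real.Gamma_add_one hpos.ne']
  have hkey := key_telescope h0 h1 hθ n hn j
  rw [hadd, div_sub_div _ _ hΓ.ne' (mul_ne_zero hpos.ne' hΓ.ne'),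
    div_eq_div_iff (by positivity) (by positivity)]
  linear_combination (Real.Gamma (θ + (n:ℝ))^2 * (θ + (n:ℝ))) * hkey

/-- Siegmund duality for the two-parameter Poisson–Dirichlet coalescent:
for `0 ≤ α < 1`, `θ > -α`, `(α,θ) ≠ (0,0)` and integers `i > j ≥ 1`, the series
`∑_{k=i}^{∞} s_α(k,j)/Γ(θ+k+1)` converges, say to `S`, and
`(1/Γ(θ+i)) ∑_{k=1}^{j} c_{k,α,θ} Γ(θ+αk) s_α(i,k) = c_{j,α,θ} Γ(θ+αj+1) S`
(the series over `k ≥ i` being indexed by `k = m + i`, `m : ℕ`). -/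
theorem statement17 (α θ : ℝ) (h0 : 0 ≤ α) (h1 : α < 1) (hθ : -α < θ)
    (hne : ¬(α = 0 ∧ θ = 0)) (i j : ℕ) (hj : 1 ≤ j) (hji : j < i) :
    ∃ S : ℝ,
      HasSum (fun m : ℕ => salpha α (m + i) j / Real.Gamma (θ + (m + i : ℕ) + 1)) S ∧
      (1 / Real.Gamma (θ + i)) *
          (∑ k ∈ Finset.Icc 1 j, ccoef α θ k * Real.Gamma (θ + α * k) * salpha α i k) =
        ccoef α θ j * Real.Gamma (θ + α * j + 1) * S := by
  have hi1 : 1 ≤ i := by omega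
  set A : ℕ → ℝ := fun n => Bsum α θ j n / Real.Gamma (θ + (n:ℝ)) with hA
  have hd : 0 < dco α θ j := dco_pos h0 h1 hθ j
  -- A tends to 0
  have htendA : Tendsto A atTop (nhds 0) := by
    have hAeq : ∀ n : ℕ, A n = ∑ k ∈ Finset.Icc 1 j,
        (ccoef α θ k * Real.Gamma (θ + α * k)) * (salpha α n k / Real.Gamma (θ + (n:ℝ))) := by
      intro n
      simp only [hA, Bsum, Finset.sum_div, mul_div_assoc]
    have := tendsto_finset_sum (Finset.Icc 1 j)
      (fun k (_ : k ∈ Finset.Icc 1 j) =>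
        ((salpha_div_tendsto h0 h1 hθ k).const_mul (ccoef α θ k * Real.Gamma (θ + α * k))))
    simp only [mul_zero, Finset.sum_const_zero] at this
    exact (this.congr (fun n => (hAeq n).symm)).congr' (Filter.EventuallyEq.refl _ _)
  -- partial sums
  have hpartial : ∀ N : ℕ, ∑ m ∈ Finset.range N,
      dco α θ j * (salpha α (m + i) j / Real.Gamma (θ + ((m + i : ℕ):ℝ) + 1)) =
      A i - A (N + i) := by
    intro N
    have := Finset.sum_range_sub' (fun m => A (m + i)) N
    simp only [Nat.zero_add] at this
    rw [← this]
    apply Finset.sum_congr rfl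
    intro m _
    have hmi : 1 ≤ m + i := by omega
    have ht := telescope_div h0 h1 hθ (m + i) hmi j
    have e1 : m + 1 + i = m + i + 1 := by omega
    have e2 : θ + ((m + i + 1:ℕ):ℝ) = θ + ((m + i:ℕ):ℝ) + 1 := by push_cast; ring
    rw [e1]
    rw [e2, mul_div_assoc] at ht
    simp only [hA]
    rw [e2]
    exact ht.symm
  have htail : Tendsto (fun N : ℕ => A (N + i)) atTop (nhds 0) :=
    htendA.comp (tendsto_add_atTop_nat i)
  have hlim : Tendsto (fun N : ℕ => A i - A (N + i)) atTop (nhds (A i)) := by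
    have := tendsto_const_nhds (x := A i) (f := atTop (α := ℕ)) |>.sub htail
    simpa using this
  have hF : HasSum (fun m : ℕ =>
      dco α θ j * (salpha α (m + i) j / Real.Gamma (θ + ((m + i : ℕ):ℝ) + 1))) (A i) := by
    rw [hasSum_iff_tendsto_nat_of_nonneg]
    · exact (Filter.Tendsto.congr (fun N => (hpartial N).symm)) hlim
    · intro m
      have hmi : (1:ℝ) ≤ ((m + i:ℕ):ℝ) := by exact_mod_cast (by omega : 1 ≤ m + i)
      have hΓ : 0 < Real.Gamma (θ + ((m + i:ℕ):ℝ) + 1) := Real.Gamma_pos_of_pos (by linarith)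
      exact mul_nonneg hd.le (div_nonneg (salpha_nonneg h0 h1 _ _) hΓ.le)
  refine ⟨A i / dco α θ j, ?_, ?_⟩
  · have := hF.mul_left (dco α θ j)⁻¹
    have he : ∀ m : ℕ, (dco α θ j)⁻¹ *
        (dco α θ j * (salpha α (m + i) j / Real.Gamma (θ + ((m + i : ℕ):ℝ) + 1))) =
        salpha α (m + i) j / Real.Gamma (θ + ((m + i : ℕ):ℝ) + 1) := by
      intro m
      rw [← mul_assoc, inv_mul_cancel₀ hd.ne', one_mul]
    rw [funext he, inv_mul_eq_div] at this
    exact this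
  · have hL : (1 / Real.Gamma (θ + (i:ℝ))) * Bsum α θ j i = A i := by
      rw [hA, one_div, inv_mul_eq_div]
    have hR : ccoef α θ j * Real.Gamma (θ + α * (j:ℝ) + 1) * (A i / dco α θ j) = A i := by
      rw [show ccoef α θ j * Real.Gamma (θ + α * (j:ℝ) + 1) = dco α θ j from rfl,
        mul_div_cancel₀ _ hd.ne']
    rw [hR]
    exact hL
end

section
/- For every real α with 0 < α < 2, the series Σ_{m=1}^{∞} Γ(m + 1 − α)/Γ(m + 2) converges and Σ_{m=1}^{∞} Γ(m + 1 − α)/Γ(m + 2) = Γ(2 − α)/α. -/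
/-- for `0 < α < 2`, the series `∑_{m=1}^{∞} Γ(m+1-α)/Γ(m+2)` converges with
sum `Γ(2-α)/α` (the series being indexed by `m = k + 1`, `k : ℕ`). -/
theorem statement18 (α : ℝ) (h0 : 0 < α) (h2 : α < 2) :
    HasSum (fun k : ℕ => Real.Gamma ((k : ℝ) + 2 - α) / Real.Gamma ((k : ℝ) + 3))
      (Real.Gamma (2 - α) / α) := by
  set b : ℕ → ℝ := fun n => Real.Gamma ((n : ℝ) + 2 - α) / (α * Real.Gamma ((n : ℝ) + 2))
    with hb
  have hΓ2pos : ∀ n : ℕ, 0 < Real.Gamma ((n : ℝ) + 2) := fun n =>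
    Real.Gamma_pos_of_pos (by positivity)
  have hΓαpos : ∀ n : ℕ, 0 < Real.Gamma ((n : ℝ) + 2 - α) := fun n =>
    Real.Gamma_pos_of_pos (by nlinarith [Nat.cast_nonneg (α := ℝ) n])
  have hnonneg : ∀ k : ℕ,
      0 ≤ Real.Gamma ((k : ℝ) + 2 - α) / Real.Gamma ((k : ℝ) + 3) := by
    intro k
    have h3 : 0 < Real.Gamma ((k : ℝ) + 3) := Real.Gamma_pos_of_pos (by positivity)
    exact le_of_lt (div_pos (hΓαpos k) h3)
  -- telescoping identity
  have key : ∀ n : ℕ,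
      Real.Gamma ((n : ℝ) + 2 - α) / Real.Gamma ((n : ℝ) + 3) = b n - b (n + 1) := by
    intro n
    have h1 : Real.Gamma ((n : ℝ) + 3) = ((n : ℝ) + 2) * Real.Gamma ((n : ℝ) + 2) := by
      have := Real.Gamma_add_one (s := (n : ℝ) + 2) (by positivity)
      rw [show (n : ℝ) + 3 = ((n : ℝ) + 2) + 1 by ring] at *
      linarith [this]
    have h2 : Real.Gamma ((n : ℝ) + 3 - α)
        = ((n : ℝ) + 2 - α) * Real.Gamma ((n : ℝ) + 2 - α) := by
      have hx : (n : ℝ) + 2 - α ≠ 0 := ne_of_gt (by nlinarith [Nat.cast_nonneg (α := ℝ) n])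
      have := Real.Gamma_add_one hx
      rw [show (n : ℝ) + 3 - α = ((n : ℝ) + 2 - α) + 1 by ring] at *
      linarith [this]
    have hcast : ((n + 1 : ℕ) : ℝ) = (n : ℝ) + 1 := by push_cast; ring
    simp only [hb, hcast]
    rw [show (n : ℝ) + 1 + 2 - α = (n : ℝ) + 3 - α by ring,
      show (n : ℝ) + 1 + 2 = (n : ℝ) + 3 by ring, h1, h2]
    have hΓ2 : Real.Gamma ((n : ℝ) + 2) ≠ 0 := ne_of_gt (hΓ2pos n)
    have hα : α ≠ 0 := ne_of_gt h0
    have hn2 : (n : ℝ) + 2 ≠ 0 := by positivity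
    field_simp
    ring
  -- b n → 0
  have hb0 : Filter.Tendsto b Filter.atTop (nhds 0) := by
    have hbound : ∀ n : ℕ, b (n + 1)
        ≤ (((n : ℝ) + 1) * ((n : ℝ) + 2)) ^ (-(α / 2)) / α := by
      intro n
      have hs : (0 : ℝ) < (n : ℝ) + 1 := by positivity
      have ht : (0 : ℝ) < (n : ℝ) + 3 := by positivity
      have ha : (0 : ℝ) < α / 2 := by linarith
      have hb' : (0 : ℝ) < (2 - α) / 2 := by linarith
      have hab : α / 2 + (2 - α) / 2 = 1 := by ring
      have hineq := Real.Gamma_mul_add_mul_le_rpow_Gamma_mul_rpow_Gamma hs ht ha hb' hab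
      have harg : α / 2 * ((n : ℝ) + 1) + (2 - α) / 2 * ((n : ℝ) + 3) = (n : ℝ) + 3 - α := by
        ring
      rw [harg] at hineq
      -- Γ(n+3) = (n+2)(n+1)Γ(n+1)
      have hΓ1 : 0 < Real.Gamma ((n : ℝ) + 1) := Real.Gamma_pos_of_pos hs
      have hΓ3 : 0 < Real.Gamma ((n : ℝ) + 3) := Real.Gamma_pos_of_pos ht
      have e1 : Real.Gamma ((n : ℝ) + 2) = ((n : ℝ) + 1) * Real.Gamma ((n : ℝ) + 1) := by
        have := Real.Gamma_add_one (s := (n : ℝ) + 1) (ne_of_gt hs)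
        rw [show (n : ℝ) + 2 = ((n : ℝ) + 1) + 1 by ring]; linarith
      have e2 : Real.Gamma ((n : ℝ) + 3)
          = ((n : ℝ) + 2) * (((n : ℝ) + 1) * Real.Gamma ((n : ℝ) + 1)) := by
        have := Real.Gamma_add_one (s := (n : ℝ) + 2) (by positivity)
        rw [show (n : ℝ) + 3 = ((n : ℝ) + 2) + 1 by ring, this, e1]
      -- express b (n+1)
      have hcast : ((n + 1 : ℕ) : ℝ) = (n : ℝ) + 1 := by push_cast; ring
      have hbval : b (n + 1) = Real.Gamma ((n : ℝ) + 3 - α) / (α * Real.Gamma ((n : ℝ) + 3)) := by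
        simp only [hb, hcast]
        rw [show (n : ℝ) + 1 + 2 - α = (n : ℝ) + 3 - α by ring,
          show (n : ℝ) + 1 + 2 = (n : ℝ) + 3 by ring]
      rw [hbval]
      rw [div_le_div_iff₀ (by positivity) h0]
      -- goal: Γ(n+3-α) * α ≤ ((n+1)(n+2))^(-(α/2)) * (α * Γ(n+3))
      set P : ℝ := ((n : ℝ) + 1) * ((n : ℝ) + 2) with hP
      have hPpos : 0 < P := by positivity
      have hrpow : Real.Gamma ((n : ℝ) + 1) ^ (α / 2) * Real.Gamma ((n : ℝ) + 3) ^ ((2 - α) / 2)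
          = P ^ (-(α / 2)) * Real.Gamma ((n : ℝ) + 3) := by
        have e3 : Real.Gamma ((n : ℝ) + 3) = P * Real.Gamma ((n : ℝ) + 1) := by
          rw [e2, hP]; ring
        have hg : Real.Gamma ((n : ℝ) + 1) ^ (α / 2) * Real.Gamma ((n : ℝ) + 1) ^ ((2 - α) / 2)
            = Real.Gamma ((n : ℝ) + 1) := by
          rw [← Real.rpow_add hΓ1, hab, Real.rpow_one]
        have hp : P ^ (-(α / 2)) * P = P ^ ((2 - α) / 2) := by
          rw [show ((2 - α) / 2) = -(α / 2) + 1 by ring, Real.rpow_add_one (ne_of_gt hPpos)]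
        rw [e3, Real.mul_rpow hPpos.le hΓ1.le]
        calc Real.Gamma ((n : ℝ) + 1) ^ (α / 2)
              * (P ^ ((2 - α) / 2) * Real.Gamma ((n : ℝ) + 1) ^ ((2 - α) / 2))
            = P ^ ((2 - α) / 2) * (Real.Gamma ((n : ℝ) + 1) ^ (α / 2)
              * Real.Gamma ((n : ℝ) + 1) ^ ((2 - α) / 2)) := by ring
          _ = P ^ ((2 - α) / 2) * Real.Gamma ((n : ℝ) + 1) := by rw [hg]
          _ = P ^ (-(α / 2)) * (P * Real.Gamma ((n : ℝ) + 1)) := by rw [← hp]; ring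
      nlinarith [hΓ3, hineq, hrpow, Real.rpow_pos_of_pos hPpos (-(α/2))]
    -- squeeze b (n+1) between 0 and the bound
    have hbnd0 : Filter.Tendsto (fun n : ℕ => (((n : ℝ) + 1) * ((n : ℝ) + 2)) ^ (-(α / 2)) / α)
        Filter.atTop (nhds 0) := by
      have h1 : Filter.Tendsto (fun n : ℕ => ((n : ℝ) + 1) * ((n : ℝ) + 2))
          Filter.atTop Filter.atTop := by
        apply Filter.Tendsto.atTop_mul_atTop₀ <;>
          exact Filter.tendsto_atTop_add_const_right _ _ tendsto_natCast_atTop_atTop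
      have h2 := (tendsto_rpow_neg_atTop (by linarith : (0 : ℝ) < α / 2)).comp h1
      simpa using h2.div_const α
    have hshift : Filter.Tendsto (fun n : ℕ => b (n + 1)) Filter.atTop (nhds 0) := by
      refine tendsto_of_tendsto_of_tendsto_of_le_of_le tendsto_const_nhds hbnd0 ?_ hbound
      intro n
      exact le_of_lt (div_pos (hΓαpos (n + 1)) (mul_pos h0 (hΓ2pos (n + 1))))
    exact (Filter.tendsto_add_atTop_iff_nat 1).mp hshift
  -- conclude
  rw [hasSum_iff_tendsto_nat_of_nonneg hnonneg]
  have hpart : ∀ n : ℕ,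
      ∑ k ∈ Finset.range n, Real.Gamma ((k : ℝ) + 2 - α) / Real.Gamma ((k : ℝ) + 3)
        = b 0 - b n := by
    intro n
    rw [show (b 0 - b n) = ∑ k ∈ Finset.range n, (b k - b (k + 1)) from
      (Finset.sum_range_sub' b n).symm]
    exact Finset.sum_congr rfl fun k _ => key k
  have hb0val : b 0 = Real.Gamma (2 - α) / α := by
    simp only [hb]
    norm_num [Real.Gamma_two]
  simp only [hpart]
  have := tendsto_const_nhds (x := b 0) (f := Filter.atTop (α := ℕ)) |>.sub hb0
  simpa [hb0val] using this
end
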